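/- Let Y be a nonempty smooth manifold (finite-dimensional, Hausdorff, second countable, without boundary). Then the map sending a point y ∈ Y to the evaluation map ev_y : C∞(Y,ℝ) → ℝ, ev_y(c) = c(y), is a bijection from Y onto the set of unital ℝ-algebra homomorphisms C∞(Y,ℝ) → ℝ. Equivalently, every unital ℝ-algebra homomorphism φ : C∞(Y,ℝ) → ℝ is evaluation at a unique point of Y. -/

import Mathlib

open scoped Manifold

variable {E : Type*} [NormedAddCommGroup E] [NormedSpace ℝ E] [FiniteDimensional ℝ E]
  {Y : Type*} [TopologicalSpace Y] [ChartedSpace E Y]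
  [IsManifold (𝓘(ℝ, E)) (⊤ : ℕ∞) Y] [T2Space Y] [SecondCountableTopology Y]

/-- Evaluation at a point `y` of `Y`, as a unital `ℝ`-algebra homomorphism
`C∞(Y,ℝ) →ₐ[ℝ] ℝ`. -/
noncomputable def evalAlgHom (y : Y) : C^(⊤ : ℕ∞)⟮𝓘(ℝ, E), Y; ℝ⟯ →ₐ[ℝ] ℝ where
  toFun c := c y
  map_one' := rfl
  map_mul' _ _ := rfl
  map_zero' := rfl
  map_add' _ _ := rfl
  commutes' _ := rfl

section Aux

open Set

theorem exists_exhaustion_fun :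
    ∃ f : C^(⊤ : ℕ∞)⟮𝓘(ℝ, E), Y; ℝ⟯, ∀ a : ℝ, IsCompact (f ⁻¹' Set.Iic a) := by
  haveI : LocallyCompactSpace Y := ChartedSpace.locallyCompactSpace E Y
  let K : CompactExhaustion Y := CompactExhaustion.choice Y
  choose f hf0 hf1 hf01 using fun n : ℕ =>
    exists_contMDiffMap_zero_one_of_isClosed 𝓘(ℝ, E) (K.isCompact n).isClosed
      (isClosed_compl_iff.mpr isOpen_interior)
      (Set.disjoint_left.mpr fun x hx hx' => hx' (K.subset_interior_succ n hx))
  -- each `f n` is `0` on `K n`, `1` outside `interior (K (n+1))`, with values in `[0,1]`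
  have hzero : ∀ (m n : ℕ), m ≤ n → ∀ y ∈ K m, f n y = 0 := fun m n hmn y hy =>
    hf0 n (K.subset hmn hy)
  set h : Y → ℝ := fun y => ∑' n, f n y with hh
  have hsum : ∀ (m : ℕ) (y : Y), y ∈ K m → h y = ∑ n ∈ Finset.range m, f n y := by
    intro m y hy
    exact tsum_eq_sum fun n hn =>
      hzero m n (le_of_not_gt fun hlt => hn (Finset.mem_range.mpr hlt)) y hy
  have hsummable : ∀ y : Y, Summable fun n => f n y := by
    intro y
    exact summable_of_ne_finset_zero (s := Finset.range (K.find y)) fun n hn =>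
      hzero (K.find y) n (le_of_not_gt fun hlt => hn (Finset.mem_range.mpr hlt)) y (K.mem_find y)
  have hsmooth : ContMDiff 𝓘(ℝ, E) 𝓘(ℝ, ℝ) (⊤ : ℕ∞) h := by
    intro y₀
    have hy₀ : y₀ ∈ interior (K (K.find y₀ + 1)) := K.subset_interior_succ _ (K.mem_find y₀)
    set m := K.find y₀ + 1
    have : ∀ y ∈ interior (K m), h y = ∑ n ∈ Finset.range m, f n y := fun y hy =>
      hsum m y (interior_subset hy)
    have hfin : ContMDiff 𝓘(ℝ, E) 𝓘(ℝ, ℝ) (⊤ : ℕ∞) fun y => ∑ n ∈ Finset.range m, f n y :=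
      contMDiff_finsetSum fun n _ => (f n).contMDiff
    exact (hfin.contMDiffAt.congr_of_eventuallyEq
      (Filter.mem_of_superset (isOpen_interior.mem_nhds hy₀) this)).contMDiffWithinAt
  have hlb : ∀ (m : ℕ) (y : Y), y ∉ K m → (m : ℝ) ≤ h y := by
    intro m y hy
    have hterm : ∀ n ∈ Finset.range m, f n y = 1 := by
      intro n hn
      refine hf1 n fun hmem => hy ?_
      exact K.subset (Finset.mem_range.mp hn) (interior_subset hmem)
    have hle : ∑ n ∈ Finset.range m, f n y ≤ h y :=
      Summable.sum_le_tsum (Finset.range m) (fun n _ => (hf01 n y).1) (hsummable y)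
    calc (m : ℝ) = ∑ n ∈ Finset.range m, f n y := by
          rw [Finset.sum_congr rfl hterm]; simp
      _ ≤ h y := hle
  refine ⟨⟨h, hsmooth⟩, fun a => ?_⟩
  have hsub : (⟨h, hsmooth⟩ : C^(⊤ : ℕ∞)⟮𝓘(ℝ, E), Y; ℝ⟯) ⁻¹' Set.Iic a ⊆ K (⌈a⌉₊ + 1) := by
    intro y hy
    by_contra hyK
    have h1 : ((⌈a⌉₊ + 1 : ℕ) : ℝ) ≤ h y := hlb _ y hyK
    have h2 : h y ≤ a := hy
    have h3 : a ≤ (⌈a⌉₊ : ℝ) := Nat.le_ceil a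
    push_cast at h1
    linarith
  exact (K.isCompact _).of_isClosed_subset
    (isClosed_Iic.preimage (ContMDiffMap.contMDiff _).continuous) hsub

end Aux

/-- **Points of `Spec C∞(Y)` are points of `Y`** (Remark 2.7(i) of the paper).
For a nonempty smooth manifold `Y`, the map sending `y ∈ Y` to the evaluation homomorphism
`ev_y : C∞(Y,ℝ) → ℝ` is a bijection onto the set of unital `ℝ`-algebra homomorphisms
`C∞(Y,ℝ) → ℝ`; i.e. every `ℝ`-algebra morphism `C∞(Y,ℝ) → ℝ` is evaluation at a unique
point of `Y`. -/
theorem bijective_evalAlgHom [Nonempty Y] :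
    Function.Bijective (fun y : Y => evalAlgHom (E := E) y) := by
  haveI : LocallyCompactSpace Y := ChartedSpace.locallyCompactSpace E Y
  constructor
  · -- injectivity: smooth functions separate points
    intro y₁ y₂ hy
    by_contra hne
    obtain ⟨f, hf0, hf1, -⟩ := exists_contMDiffMap_zero_one_of_isClosed 𝓘(ℝ, E)
      (isClosed_singleton (x := y₁)) (isClosed_singleton (x := y₂))
      (Set.disjoint_singleton.mpr hne)
    have h01 : (0 : ℝ) = 1 := by
      have := DFunLike.congr_fun hy f
      change f y₁ = f y₂ at this
      simpa [evalAlgHom, hf0 (Set.mem_singleton y₁), hf1 (Set.mem_singleton y₂)] using this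
    exact zero_ne_one h01
  · -- surjectivity
    intro φ
    by_contra hφ
    push_neg at hφ
    have hc : ∀ y : Y, ∃ c : C^(⊤ : ℕ∞)⟮𝓘(ℝ, E), Y; ℝ⟯, φ c ≠ c y := by
      intro y
      by_contra hcon
      push_neg at hcon
      exact hφ y (AlgHom.ext fun c => (hcon c).symm)
    choose c hcne using hc
    set d : Y → C^(⊤ : ℕ∞)⟮𝓘(ℝ, E), Y; ℝ⟯ :=
      fun y => (c y - algebraMap ℝ _ (φ (c y))) ^ 2 with hd
    have hφd : ∀ y, φ (d y) = 0 := by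
      intro y
      simp [hd, map_pow, map_sub, AlgHom.commutes, sub_self]
    have hd_apply : ∀ y z, d y z = (c y z - φ (c y)) ^ 2 := by
      intro y z
      have := map_sub (evalAlgHom (E := E) z) (c y) (algebraMap ℝ _ (φ (c y)))
      calc d y z = evalAlgHom (E := E) z (d y) := rfl
        _ = (evalAlgHom (E := E) z (c y - algebraMap ℝ _ (φ (c y)))) ^ 2 := by
            rw [hd, map_pow]
        _ = (c y z - φ (c y)) ^ 2 := by
            rw [map_sub, AlgHom.commutes]; rfl
    have hdpos : ∀ y, 0 < d y y := by
      intro y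
      rw [hd_apply]
      exact sq_pos_of_ne_zero (sub_ne_zero_of_ne (hcne y).symm)
    obtain ⟨hfun, hcomp⟩ := exists_exhaustion_fun (E := E) (Y := Y)
    set a := φ hfun with ha
    have hK : IsCompact (hfun ⁻¹' Set.Iic a) := hcomp a
    obtain ⟨t, ht⟩ := hK.elim_finite_subcover (fun y => {z | 0 < d y z})
      (fun y => isOpen_lt continuous_const (d y).contMDiff.continuous)
      (fun z hz => Set.mem_iUnion.mpr ⟨z, hdpos z⟩)
    set g : C^(⊤ : ℕ∞)⟮𝓘(ℝ, E), Y; ℝ⟯ :=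
      (∑ y ∈ t, d y) + (hfun - algebraMap ℝ _ a) ^ 2 with hg
    have hφg : φ g = 0 := by
      simp [hg, map_add, map_sum, hφd, map_pow, map_sub, AlgHom.commutes, ← ha, sub_self]
    have hg_apply : ∀ z, g z = (∑ y ∈ t, d y z) + (hfun z - a) ^ 2 := by
      intro z
      calc g z = evalAlgHom (E := E) z g := rfl
        _ = (∑ y ∈ t, evalAlgHom (E := E) z (d y)) +
              (evalAlgHom (E := E) z (hfun - algebraMap ℝ _ a)) ^ 2 := by
            rw [hg, map_add, map_sum, map_pow]
        _ = (∑ y ∈ t, d y z) + (hfun z - a) ^ 2 := by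
            rw [map_sub, AlgHom.commutes]; rfl
    have hgpos : ∀ z, 0 < g z := by
      intro z
      rw [hg_apply]
      have hsum_nonneg : ∀ y ∈ t, (0 : ℝ) ≤ d y z := fun y _ => by
        rw [hd_apply]; exact sq_nonneg _
      by_cases hz : z ∈ hfun ⁻¹' Set.Iic a
      · obtain ⟨y₀, hy₀t, hy₀⟩ := Set.mem_iUnion₂.mp (ht hz)
        have h1 : (0 : ℝ) < d y₀ z := hy₀
        have h2 : d y₀ z ≤ ∑ y ∈ t, d y z := Finset.single_le_sum hsum_nonneg hy₀t
        have h3 : (0 : ℝ) ≤ (hfun z - a) ^ 2 := sq_nonneg _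
        linarith
      · have h1 : a < hfun z := lt_of_not_ge fun hle => hz hle
        have h2 : (0 : ℝ) < (hfun z - a) ^ 2 :=
          sq_pos_of_ne_zero (sub_ne_zero_of_ne (by linarith))
        have h3 : (0 : ℝ) ≤ ∑ y ∈ t, d y z := Finset.sum_nonneg hsum_nonneg
        linarith
    set ginv : C^(⊤ : ℕ∞)⟮𝓘(ℝ, E), Y; ℝ⟯ :=
      ⟨fun z => (g z)⁻¹, g.contMDiff.inv₀ fun z => (hgpos z).ne'⟩ with hginv
    have hmul : g * ginv = 1 := by
      ext z
      show g z * (g z)⁻¹ = 1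
      exact mul_inv_cancel₀ (hgpos z).ne'
    have : (1 : ℝ) = 0 := by
      have h1 : φ (g * ginv) = 1 := by rw [hmul, map_one]
      rw [map_mul, hφg, zero_mul] at h1
      exact h1.symm
    exact one_ne_zero this
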